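/- A function f : S^{2×2} → ℝ is symmetric polyaffine (i.e., both f and −f are symmetric polyconvex) if and only if f is affine, i.e., there exist B ∈ S^{2×2} and b ∈ ℝ such that f(ε) = B:ε + b for all ε ∈ S^{2×2}. -/

import Mathlib

open Matrix

/-- The symmetric part `(F + Fᵀ)/2` of a 2×2 matrix. -/
noncomputable def symPart (F : Matrix (Fin 2) (Fin 2) ℝ) : Matrix (Fin 2) (Fin 2) ℝ :=
  (1 / 2 : ℝ) • (F + Fᵀ)

/-- Frobenius inner product `A:B = Σ_{i,j} A_{ij} B_{ij}` of 2×2 matrices. -/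
def mdot2 (A B : Matrix (Fin 2) (Fin 2) ℝ) : ℝ := ∑ i, ∑ j, A i j * B i j

/-- A function `W : ℝ^{2×2} → ℝ` is polyconvex if there is a convex function
`G : ℝ^{2×2} × ℝ → ℝ` with `W F = G (F, det F)` for all `F`. -/
def Polyconvex2 (W : Matrix (Fin 2) (Fin 2) ℝ → ℝ) : Prop :=
  ∃ G : Matrix (Fin 2) (Fin 2) ℝ × ℝ → ℝ,
    ConvexOn ℝ Set.univ G ∧ ∀ F : Matrix (Fin 2) (Fin 2) ℝ, W F = G (F, F.det)

/-- `f : S^{2×2} → ℝ` is symmetric polyconvex if `F ↦ f (Fˢ)` is polyconvex. -/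
def SymPolyconvex2 (f : Matrix (Fin 2) (Fin 2) ℝ → ℝ) : Prop :=
  Polyconvex2 (fun F => f (symPart F))

lemma symPart_isSymm (F : Matrix (Fin 2) (Fin 2) ℝ) : (symPart F).IsSymm := by
  unfold Matrix.IsSymm symPart
  rw [transpose_smul, transpose_add, transpose_transpose, add_comm]

lemma symPart_of_isSymm {E : Matrix (Fin 2) (Fin 2) ℝ} (h : E.IsSymm) : symPart E = E := by
  unfold symPart
  rw [h.eq]
  module

lemma mdot2_neg (A B : Matrix (Fin 2) (Fin 2) ℝ) : mdot2 (-A) B = -(mdot2 A B) := by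
  simp [mdot2, Finset.sum_neg_distrib]; ring

lemma sympoly_affine (B : Matrix (Fin 2) (Fin 2) ℝ) (b : ℝ) (f : Matrix (Fin 2) (Fin 2) ℝ → ℝ)
    (hf : ∀ F : Matrix (Fin 2) (Fin 2) ℝ, f (symPart F) = mdot2 B (symPart F) + b) :
    SymPolyconvex2 f := by
  refine ⟨fun p => mdot2 B (symPart p.1) + b, ⟨convex_univ, ?_⟩, fun F => hf F⟩
  intro p _ q _ a c ha hc hac
  have key : mdot2 B (symPart ((a • p + c • q).1)) =
      a * mdot2 B (symPart p.1) + c * mdot2 B (symPart q.1) := by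
    simp [mdot2, symPart, Matrix.add_apply, Matrix.smul_apply, Fin.sum_univ_two,
      Matrix.transpose_apply, smul_eq_mul]
    ring
  simp only [smul_eq_mul]
  rw [key]
  have hb : a*b + c*b = b := by rw [← add_mul, hac, one_mul]
  linarith [hb]

lemma line_affine (f : Matrix (Fin 2) (Fin 2) ℝ → ℝ)
    (h1 : SymPolyconvex2 f) (h2 : SymPolyconvex2 (fun ε => -f ε))
    (E D : Matrix (Fin 2) (Fin 2) ℝ) (hD : D.det = 0) (u : ℝ) :
    f (symPart (E + u • D)) = (1 - u) * f (symPart E) + u * f (symPart (E + D)) := by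
  obtain ⟨G, hGc, hG⟩ := h1
  obtain ⟨H, hHc, hH⟩ := h2
  have hD' : D 0 0 * D 1 1 - D 0 1 * D 1 0 = 0 := by
    rw [Matrix.det_fin_two] at hD; linarith
  set c : ℝ := E 0 0 * D 1 1 + D 0 0 * E 1 1 - E 0 1 * D 1 0 - D 0 1 * E 1 0 with hc
  have hdet : ∀ a : ℝ, (E + a • D).det = E.det + a * c := by
    intro a
    rw [Matrix.det_fin_two, Matrix.det_fin_two]
    simp only [Matrix.add_apply, Matrix.smul_apply, smul_eq_mul, hc]
    linear_combination (a^2) * hD'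
  have key : ∀ a b θ : ℝ, 0 ≤ θ → θ ≤ 1 →
      f (symPart (E + (θ*a + (1-θ)*b) • D)) =
      θ * f (symPart (E + a • D)) + (1-θ) * f (symPart (E + b • D)) := by
    intro a b θ hθ0 hθ1
    have hpt : θ • ((E + a • D, (E + a • D).det) : Matrix (Fin 2) (Fin 2) ℝ × ℝ)
        + (1-θ) • (E + b • D, (E + b • D).det)
        = (E + (θ*a + (1-θ)*b) • D, (E + (θ*a + (1-θ)*b) • D).det) := by
      apply Prod.ext
      · show θ • (E + a • D) + (1-θ) • (E + b • D) = E + (θ*a + (1-θ)*b) • D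
        module
      · show θ * (E + a • D).det + (1-θ) * (E + b • D).det = (E + (θ*a + (1-θ)*b) • D).det
        rw [hdet, hdet, hdet]; ring
    have hGle := hGc.2 (Set.mem_univ ((E + a • D, (E + a • D).det)))
      (Set.mem_univ ((E + b • D, (E + b • D).det))) hθ0 (sub_nonneg.mpr hθ1) (by ring)
    have hHle := hHc.2 (Set.mem_univ ((E + a • D, (E + a • D).det)))
      (Set.mem_univ ((E + b • D, (E + b • D).det))) hθ0 (sub_nonneg.mpr hθ1) (by ring)
    rw [hpt] at hGle hHle
    simp only [smul_eq_mul] at hGle hHle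
    rw [← hG, ← hG, ← hG] at hGle
    rw [← hH, ← hH, ← hH] at hHle
    simp only at hHle
    linarith
  rcases le_or_gt 0 u with h0 | h0
  · rcases le_or_gt u 1 with h1 | h1
    · have hk := key 1 0 u h0 h1
      simp only [mul_one, mul_zero, add_zero, one_smul, zero_smul] at hk
      linarith
    · have hu : u ≠ 0 := by linarith
      have hk := key u 0 (1/u) (by positivity) (by rw [div_le_one (by linarith)]; linarith)
      have hs : (1/u)*u + (1-1/u)*0 = 1 := by field_simp; ring
      rw [hs] at hk
      simp only [one_smul, zero_smul, add_zero] at hk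
      have h1u : (1:ℝ)/u > 0 := by positivity
      have hk2 := congrArg (fun t => u * t) hk
      rw [mul_add, ← mul_assoc, ← mul_assoc, mul_one_div_cancel hu, one_mul] at hk2
      have e2 : u * (1 - 1/u) = u - 1 := by field_simp
      rw [e2] at hk2
      linarith
  · have h1u : (1:ℝ) - u > 0 := by linarith
    have hk := key u 1 (1/(1-u)) (by positivity) (by rw [div_le_one h1u]; linarith)
    have hs : (1/(1-u))*u + (1-1/(1-u))*1 = 0 := by field_simp; ring
    rw [hs] at hk
    simp only [zero_smul, add_zero, one_smul] at hk
    have hu : (1:ℝ) - u ≠ 0 := by linarith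
    have hk2 := congrArg (fun t => (1 - u) * t) hk
    rw [mul_add, ← mul_assoc, ← mul_assoc, mul_one_div_cancel hu, one_mul] at hk2
    have e2 : (1 - u) * (1 - 1/(1 - u)) = -u := by field_simp; ring
    rw [e2] at hk2
    linarith

lemma affF (f : Matrix (Fin 2) (Fin 2) ℝ → ℝ)
    (h1 : SymPolyconvex2 f) (h2 : SymPolyconvex2 (fun ε => -f ε))
    (x y z p r q u : ℝ) (hpq : p * r ≤ q^2) :
    f !![x + u*p, z + u*q; z + u*q, y + u*r]
      = (1-u) * f !![x, z; z, y] + u * f !![x+p, z+q; z+q, y+r] := by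
  set w := Real.sqrt (q^2 - p*r) with hwdef
  have hw : w^2 = q^2 - p*r := Real.sq_sqrt (by linarith)
  have hD : (!![p, q + w; q - w, r] : Matrix (Fin 2) (Fin 2) ℝ).det = 0 := by
    rw [Matrix.det_fin_two_of]
    linear_combination hw
  have key := line_affine f h1 h2 !![x, z; z, y] !![p, q + w; q - w, r] hD u
  have e1 : symPart (!![x, z; z, y] + u • !![p, q + w; q - w, r]) =
      !![x + u*p, z + u*q; z + u*q, y + u*r] := by
    ext i j
    fin_cases i <;> fin_cases j <;>
      simp [symPart, Matrix.add_apply, Matrix.smul_apply, Matrix.transpose_apply,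
        smul_eq_mul, Matrix.vecHead, Matrix.vecTail] <;> ring
  have e0 : symPart (!![x, z; z, y] : Matrix (Fin 2) (Fin 2) ℝ) = !![x, z; z, y] := by
    ext i j
    fin_cases i <;> fin_cases j <;>
      simp [symPart, Matrix.add_apply, Matrix.transpose_apply,
        smul_eq_mul, Matrix.vecHead, Matrix.vecTail] <;> ring
  have e2 : symPart (!![x, z; z, y] + !![p, q + w; q - w, r]) =
      !![x + p, z + q; z + q, y + r] := by
    ext i j
    fin_cases i <;> fin_cases j <;>
      simp [symPart, Matrix.add_apply, Matrix.transpose_apply,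
        smul_eq_mul, Matrix.vecHead, Matrix.vecTail] <;> ring
  rw [e1, e0, e2] at key
  exact key

/-- A function on `S^{2×2}` is symmetric polyaffine iff it is affine. -/
theorem symmetric_polyaffine_iff_affine_2d (f : Matrix (Fin 2) (Fin 2) ℝ → ℝ) :
    (SymPolyconvex2 f ∧ SymPolyconvex2 (fun ε => -f ε)) ↔
      ∃ (B : Matrix (Fin 2) (Fin 2) ℝ) (b : ℝ), B.IsSymm ∧
        ∀ ε : Matrix (Fin 2) (Fin 2) ℝ, ε.IsSymm → f ε = mdot2 B ε + b := by
  constructor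
  · rintro ⟨h1, h2⟩
    set b := f !![(0:ℝ), 0; 0, 0] with hbdef
    set A1 := f !![(1:ℝ), 0; 0, 0] with hA1def
    set A2 := f !![(0:ℝ), 0; 0, 1] with hA2def
    set A3 := f !![(0:ℝ), 1; 1, 0] with hA3def
    -- general one-variable affine relations
    have hz : ∀ t : ℝ, f !![0, t; t, 0] = (1-t)*b + t*A3 := by
      intro t
      have h := affF f h1 h2 0 0 0 0 0 1 t (by norm_num)
      norm_num at h; exact h
    have hxz : ∀ s t : ℝ, f !![s, t; t, 0] = (1-s) * f !![0, t; t, 0] + s * f !![1, t; t, 0] := by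
      intro s t
      have h := affF f h1 h2 0 0 t 1 0 0 s (by norm_num)
      norm_num at h; exact h
    have h1z : ∀ t : ℝ, f !![1, t; t, 0] = (1-t)*A1 + t * f !![1, 1; 1, 0] := by
      intro t
      have h := affF f h1 h2 1 0 0 0 0 1 t (by norm_num)
      norm_num at h; exact h
    have hc : f !![(1:ℝ), 1; 1, 0] = A1 + A3 - b := by
      have i1 := hxz 2 2
      have i2 := hz 2
      have i3 := h1z 2
      have i4 := affF f h1 h2 0 0 0 1 0 1 2 (by norm_num)
      norm_num at i4
      linarith
    have L3 : ∀ s t : ℝ, f !![s, t; t, 0] = b + s*(A1-b) + t*(A3-b) := by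
      intro s t
      have h := hxz s t
      rw [hz t, h1z t, hc] at h
      rw [h]; ring
    have hyz : ∀ s t : ℝ, f !![0, t; t, s] = (1-s) * f !![0, t; t, 0] + s * f !![0, t; t, 1] := by
      intro s t
      have h := affF f h1 h2 0 0 t 0 1 0 s (by norm_num)
      norm_num at h; exact h
    have h0z1 : ∀ t : ℝ, f !![0, t; t, 1] = (1-t)*A2 + t * f !![0, 1; 1, 1] := by
      intro t
      have h := affF f h1 h2 0 1 0 0 0 1 t (by norm_num)
      norm_num at h; exact h
    have hc2 : f !![(0:ℝ), 1; 1, 1] = A2 + A3 - b := by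
      have i1 := hyz 2 2
      have i2 := hz 2
      have i3 := h0z1 2
      have i4 := affF f h1 h2 0 0 0 0 1 1 2 (by norm_num)
      norm_num at i4
      linarith
    have L4 : ∀ s t : ℝ, f !![0, t; t, s] = b + s*(A2-b) + t*(A3-b) := by
      intro s t
      have h := hyz s t
      rw [hz t, h0z1 t, hc2] at h
      rw [h]; ring
    have hxgen : ∀ x y z : ℝ, f !![x, z; z, y] = (1-x) * f !![0, z; z, y] + x * f !![1, z; z, y] := by
      intro x y z
      have h := affF f h1 h2 0 y z 1 0 0 x (by norm_num)
      norm_num at h; exact h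
    have hygen : ∀ y z : ℝ, f !![1, z; z, y] = (1-y) * f !![1, z; z, 0] + y * f !![1, z; z, 1] := by
      intro y z
      have h := affF f h1 h2 1 0 z 0 1 0 y (by norm_num)
      norm_num at h; exact h
    have h11z : ∀ z : ℝ, f !![1, z; z, 1] = (1-z) * f !![1, 0; 0, 1] + z * f !![1, 1; 1, 1] := by
      intro z
      have h := affF f h1 h2 1 1 0 0 0 1 z (by norm_num)
      norm_num at h; exact h
    -- pin down the two remaining corner values
    have hdm := affF f h1 h2 0 0 0 1 1 2 (-1) (by norm_num)
    norm_num at hdm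
    have hd2 := affF f h1 h2 0 0 0 1 1 2 2 (by norm_num)
    norm_num at hd2
    have j1 := hxgen (-1) (-1) (-2)
    have j2 := L4 (-1) (-2)
    have j3 := hygen (-1) (-2)
    have j4 := L3 1 (-2)
    have j5 := h11z (-2)
    have j6 := h11z 2
    have j7 := hxgen 2 2 4
    have j8 := L4 2 4
    have j9 := hygen 2 4
    have j10 := L3 1 4
    have j11 := h11z 4
    norm_num at j1 j2 j3 j4 j5 j6 j7 j8 j9 j10 j11
    have hc0 : f !![(1:ℝ), 0; 0, 1] = A1 + A2 - b := by linarith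
    have hc1 : f !![(1:ℝ), 1; 1, 1] = A1 + A2 + A3 - 2*b := by linarith
    refine ⟨!![A1 - b, (A3 - b)/2; (A3 - b)/2, A2 - b], b, ?_, ?_⟩
    · unfold Matrix.IsSymm
      ext i j
      fin_cases i <;> fin_cases j <;>
        simp [Matrix.transpose_apply, Matrix.vecHead, Matrix.vecTail]
    · intro ε hε
      have hεeq : ε = !![ε 0 0, ε 0 1; ε 0 1, ε 1 1] := by
        have h10 : ε 1 0 = ε 0 1 := by
          have := congrFun (congrFun hε.eq 0) 1
          simpa [Matrix.transpose_apply] using this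
        ext i j
        fin_cases i <;> fin_cases j <;>
          simp [Matrix.vecHead, Matrix.vecTail, h10]
      set x := ε 0 0
      set y := ε 1 1
      set z := ε 0 1
      rw [hεeq]
      have hmd : mdot2 !![A1 - b, (A3 - b)/2; (A3 - b)/2, A2 - b] !![x, z; z, y]
          = (A1-b)*x + (A3-b)*z + (A2-b)*y := by
        simp [mdot2, Fin.sum_univ_two, Matrix.vecHead, Matrix.vecTail]
        ring
      have e := hxgen x y z
      rw [L4 y z, hygen y z, L3 1 z, h11z z, hc0, hc1] at e
      rw [e, hmd]
      ring
  · rintro ⟨B, b, hB, hf⟩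
    constructor
    · exact sympoly_affine B b f (fun F => by rw [hf (symPart F) (symPart_isSymm F)])
    · apply sympoly_affine (-B) (-b)
      intro F
      show -f (symPart F) = mdot2 (-B) (symPart F) + (-b)
      rw [mdot2_neg, hf (symPart F) (symPart_isSymm F)]
      ring
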